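/- Let λ ∈ ℂ with Im λ > 0, and consider the factor E(x) = exp((4/5) i (x+λ)^{5/4}) for x ≥ X > 0 (principal branch). Then |E(x)| = exp(-Re(i·(4/5)(x+λ)^{5/4})) decays like exp(-(Im λ) x^{1/4}) up to a factor 1 + O(x^{-3/4}); in particular E ∈ L²(X, ∞). -/

import Mathlib

open Filter MeasureTheory Asymptotics

private lemma remA15 :
    (fun w : ℂ => (1+w) ^ ((5:ℂ)/4) - 1 - (5/4) * w) =O[nhds 0] (fun w => ‖w‖^2) := by
  have hslit : (1:ℂ) + 0 ∈ Complex.slitPlane := by simp [Complex.mem_slitPlane_iff]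
  have ha : AnalyticAt ℂ (fun w : ℂ => (1+w) ^ ((5:ℂ)/4)) 0 :=
    (analyticAt_const.add analyticAt_id).cpow analyticAt_const hslit
  obtain ⟨p, hp⟩ := ha
  have hO := hp.isBigO_sub_partialSum_pow 2
  have hc0 : p.coeff 0 = 1 := by
    have := hp.coeff_zero (fun _ => 0)
    simpa using this
  have hderiv : HasDerivAt (fun w : ℂ => (1+w) ^ ((5:ℂ)/4)) ((5:ℂ)/4) 0 := by
    have := ((hasDerivAt_id (0:ℂ)).const_add 1).cpow_const (c := (5:ℂ)/4) hslit
    simpa using this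
  have hc1 : p.coeff 1 = (5:ℂ)/4 := by
    have h1 : deriv (fun w : ℂ => (1+w) ^ ((5:ℂ)/4)) 0 = p.coeff 1 := hp.deriv
    rw [← h1, hderiv.deriv]
  refine hO.congr' ?_ Filter.EventuallyEq.rfl
  filter_upwards with y
  simp [FormalMultilinearSeries.partialSum, Finset.sum_range_succ,
    FormalMultilinearSeries.apply_eq_pow_smul_coeff, hc0, hc1]
  ring

private lemma split15 (lam : ℂ) (hlam : 0 < lam.im) {x : ℝ} (hx : 0 < x) :
    ((x:ℂ) + lam) ^ ((5:ℂ)/4)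
      = ((x ^ ((5:ℝ)/4) : ℝ) : ℂ) * (1 + lam/(x:ℂ)) ^ ((5:ℂ)/4) := by
  have hx0 : (x:ℂ) ≠ 0 := by exact_mod_cast hx.ne'
  have him : (1 + lam/(x:ℂ)).im = lam.im / x := by
    simp [Complex.add_im, Complex.div_ofReal_im]
  have hz0 : (1 : ℂ) + lam/(x:ℂ) ≠ 0 := by
    intro h
    have h0 : lam.im / x = 0 := by rw [← him, h]; simp
    exact (div_pos hlam hx).ne' h0
  have hxc : ((x ^ ((5:ℝ)/4) : ℝ) : ℂ) = (x:ℂ) ^ ((5:ℂ)/4) := by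
    rw [Complex.ofReal_cpow hx.le]
    norm_num
  rw [show (x:ℂ) + lam = (x:ℂ) * (1 + lam/(x:ℂ)) by field_simp, hxc,
    Complex.cpow_def_of_ne_zero (mul_ne_zero hx0 hz0),
    Complex.cpow_def_of_ne_zero hx0, Complex.cpow_def_of_ne_zero hz0,
    Complex.log_ofReal_mul hx hz0, ← Complex.exp_add,
    Complex.ofReal_log hx.le]
  ring_nf

private lemma errO15 (lam : ℂ) (hlam : 0 < lam.im) :
    (fun x : ℝ => (4/5) * (((x:ℂ) + lam) ^ ((5:ℂ)/4)).im - lam.im * x ^ ((1:ℝ)/4))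
      =O[atTop] fun x : ℝ => x ^ (-(3:ℝ)/4) := by
  have htend : Tendsto (fun x : ℝ => lam/(x:ℂ)) atTop (nhds 0) := by
    have h1 : Tendsto (fun x : ℝ => ((x:ℂ))⁻¹) atTop (nhds 0) := by
      have h0 := tendsto_inv_atTop_zero (𝕜 := ℝ)
      have h2 : Tendsto (fun x : ℝ => ((x⁻¹ : ℝ) : ℂ)) atTop (nhds ((0:ℝ):ℂ)) :=
        (Complex.continuous_ofReal.tendsto 0).comp h0
      simpa [Complex.ofReal_inv] using h2
    simpa [div_eq_mul_inv] using h1.const_mul lam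
  have hcomp := remA15.comp_tendsto htend
  obtain ⟨C, hCpos, hC⟩ := hcomp.exists_pos
  rw [isBigOWith_iff] at hC
  rw [isBigO_iff]
  refine ⟨C * ‖lam‖^2, ?_⟩
  filter_upwards [hC, eventually_ge_atTop (1:ℝ)] with x hCx hx1
  have hx : (0:ℝ) < x := lt_of_lt_of_le one_pos hx1
  set R : ℂ := (1 + lam/(x:ℂ)) ^ ((5:ℂ)/4) - 1 - (5/4) * (lam/(x:ℂ)) with hR
  have him : (((x:ℂ) + lam) ^ ((5:ℂ)/4)).im
      = x ^ ((5:ℝ)/4) * (R.im + (5/4) * lam.im / x) := by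
    rw [split15 lam hlam hx, Complex.im_ofReal_mul]
    congr 1
    have : ((1 + lam/(x:ℂ)) ^ ((5:ℂ)/4)) = R + 1 + (5/4) * (lam/(x:ℂ)) := by
      rw [hR]; ring
    rw [this]
    simp [Complex.add_im, Complex.mul_im, Complex.div_ofReal_im, Complex.div_ofReal_re]
    ring
  have hxq : x ^ ((5:ℝ)/4) * x⁻¹ = x ^ ((1:ℝ)/4) := by
    rw [← Real.rpow_neg_one x, ← Real.rpow_add hx]
    norm_num
  have herr : (4/5) * (((x:ℂ) + lam) ^ ((5:ℂ)/4)).im - lam.im * x ^ ((1:ℝ)/4)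
      = (4/5) * x ^ ((5:ℝ)/4) * R.im := by
    rw [him]
    linear_combination lam.im * hxq
  rw [herr]
  have hRle : ‖R‖ ≤ C * ‖lam/(x:ℂ)‖^2 := by
    have h := hCx
    simp only [Function.comp] at h
    rwa [Real.norm_eq_abs, _root_.abs_of_nonneg (by positivity)] at h
  have hnorm : ‖lam/(x:ℂ)‖ = ‖lam‖ / x := by
    rw [norm_div, Complex.norm_real]
    simp [abs_of_pos hx]
  have hRim : |R.im| ≤ ‖R‖ := Complex.abs_im_le_norm R
  have hpow : x ^ ((5:ℝ)/4) * x⁻¹ ^ 2 = x ^ (-(3:ℝ)/4) := by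
    have h2 : x⁻¹ ^ 2 = x ^ (-2 : ℝ) := by
      rw [← Real.rpow_neg_one x, ← Real.rpow_natCast (x ^ ((-1:ℝ))) 2,
        ← Real.rpow_mul hx.le]
      norm_num
    rw [h2, ← Real.rpow_add hx]
    norm_num
  have hx54 : (0:ℝ) ≤ x ^ ((5:ℝ)/4) := Real.rpow_nonneg hx.le _
  have hfinal : |(4/5) * x ^ ((5:ℝ)/4) * R.im| ≤ C * ‖lam‖^2 * x ^ (-(3:ℝ)/4) := by
    have h1 : |(4/5) * x ^ ((5:ℝ)/4) * R.im| ≤ x ^ ((5:ℝ)/4) * ‖R‖ := by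
      rw [abs_mul, abs_mul, _root_.abs_of_nonneg hx54,
        _root_.abs_of_nonneg (by norm_num : (0:ℝ) ≤ 4/5)]
      nlinarith [abs_nonneg R.im, norm_nonneg R, hRim]
    calc |(4/5) * x ^ ((5:ℝ)/4) * R.im| ≤ x ^ ((5:ℝ)/4) * ‖R‖ := h1
      _ ≤ x ^ ((5:ℝ)/4) * (C * (‖lam‖/x)^2) := by
          rw [← hnorm]; exact mul_le_mul_of_nonneg_left hRle hx54
      _ = C * ‖lam‖^2 * (x ^ ((5:ℝ)/4) * x⁻¹^2) := by
          field_simp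
      _ = C * ‖lam‖^2 * x ^ (-(3:ℝ)/4) := by rw [hpow]
  calc ‖(4/5) * x ^ ((5:ℝ)/4) * R.im‖ = |(4/5) * x ^ ((5:ℝ)/4) * R.im| := rfl
    _ ≤ C * ‖lam‖^2 * x ^ (-(3:ℝ)/4) := hfinal
    _ ≤ C * ‖lam‖^2 * ‖x ^ (-(3:ℝ)/4)‖ := by
        rw [Real.norm_eq_abs, _root_.abs_of_nonneg (Real.rpow_nonneg hx.le _)]

/-- For `Im λ > 0` and `E(x) = exp((4/5) i (x+λ)^{5/4})` (principal branch):
`|E(x)| / exp(-(Im λ) x^{1/4}) = 1 + O(x^{-3/4})` as `x → ∞`, and `E ∈ L²(X,∞)`. -/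
theorem stmt_15 (lam : ℂ) (hlam : 0 < lam.im) (X : ℝ) (hX : 0 < X) :
    ((fun x : ℝ =>
        ‖Complex.exp ((4 / 5) * Complex.I * ((x : ℂ) + lam) ^ ((5 : ℂ) / 4))‖
          / Real.exp (-(lam.im) * x ^ ((1 : ℝ) / 4)) - 1)
      =O[atTop] fun x : ℝ => x ^ (-(3 : ℝ) / 4)) ∧
    MemLp (fun x : ℝ => Complex.exp ((4 / 5) * Complex.I * ((x : ℂ) + lam) ^ ((5 : ℂ) / 4)))
      2 (MeasureTheory.volume.restrict (Set.Ioi X)) := by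
  set err : ℝ → ℝ :=
    fun x => (4/5) * (((x:ℂ) + lam) ^ ((5:ℂ)/4)).im - lam.im * x ^ ((1:ℝ)/4) with herrdef
  have herrO := errO15 lam hlam
  have habs : ∀ x : ℝ,
      ‖Complex.exp ((4 / 5) * Complex.I * ((x : ℂ) + lam) ^ ((5 : ℂ) / 4))‖
        = Real.exp (-(4/5) * (((x:ℂ) + lam) ^ ((5:ℂ)/4)).im) := by
    intro x
    rw [Complex.norm_exp]
    congr 1
    simp [Complex.mul_re, Complex.mul_im]
  have hratio : ∀ x : ℝ,
      ‖Complex.exp ((4 / 5) * Complex.I * ((x : ℂ) + lam) ^ ((5 : ℂ) / 4))‖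
          / Real.exp (-(lam.im) * x ^ ((1 : ℝ) / 4)) - 1
        = Real.exp (-(err x)) - 1 := by
    intro x
    rw [habs, ← Real.exp_sub]
    congr 2
    rw [herrdef]
    ring
  have htend0 : Tendsto err atTop (nhds 0) := by
    refine herrO.trans_tendsto ?_
    rw [show (-(3:ℝ)/4) = -((3:ℝ)/4) by norm_num]
    exact tendsto_rpow_neg_atTop (by norm_num)
  have hsmall : ∀ᶠ x in atTop, |err x| ≤ 1 := by
    have := Metric.tendsto_nhds.mp htend0 1 one_pos
    filter_upwards [this] with x hx
    rw [Real.dist_eq, sub_zero] at hx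
    exact hx.le
  constructor
  · -- part 1
    have h1 : (fun x : ℝ =>
        ‖Complex.exp ((4 / 5) * Complex.I * ((x : ℂ) + lam) ^ ((5 : ℂ) / 4))‖
          / Real.exp (-(lam.im) * x ^ ((1 : ℝ) / 4)) - 1) =O[atTop] err := by
      rw [isBigO_iff]
      refine ⟨2, ?_⟩
      filter_upwards [hsmall] with x hx
      rw [hratio x, Real.norm_eq_abs, Real.norm_eq_abs]
      have := Real.abs_exp_sub_one_le (x := -(err x)) (by rwa [abs_neg])
      rwa [abs_neg] at this
    exact h1.trans herrO
  · -- part 2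
    set E : ℝ → ℂ :=
      fun x => Complex.exp ((4 / 5) * Complex.I * ((x : ℂ) + lam) ^ ((5 : ℂ) / 4)) with hE
    have hcont : Continuous E := by
      apply Complex.continuous_exp.comp
      apply Continuous.mul continuous_const
      apply Continuous.cpow (Complex.continuous_ofReal.add continuous_const) continuous_const
      intro x
      rw [Complex.mem_slitPlane_iff]
      right
      simp [hlam.ne']
    have hmeas : AEStronglyMeasurable E (volume.restrict (Set.Ioi X)) :=
      hcont.aestronglyMeasurable
    rw [MeasureTheory.memLp_two_iff_integrable_sq_norm hmeas]
    -- eventual bound by x ^ (-2)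
    have hEbound : ∀ᶠ x in atTop, ‖E x‖^2 ≤ Real.exp 2 * Real.exp (-(2*lam.im) * x ^ ((1:ℝ)/4)) := by
      filter_upwards [hsmall] with x hx
      have h1 : ‖E x‖ = Real.exp (-(err x) - lam.im * x ^ ((1:ℝ)/4)) := by
        rw [hE, habs x]
        congr 1
        rw [herrdef]
        ring
      have h2 : -(err x) ≤ 1 := by
        have := abs_le.mp hx
        linarith [this.1]
      rw [h1, sq, ← Real.exp_add, ← Real.exp_add]
      refine Real.exp_le_exp.mpr ?_
      have : -(2*lam.im) * x ^ ((1:ℝ)/4) = -(lam.im * x ^ ((1:ℝ)/4)) - lam.im * x ^ ((1:ℝ)/4) := by ring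
      rw [this]
      simp only [herrdef] at h2 ⊢
      linarith
    have hc : (0:ℝ) < 2 * lam.im := by linarith
    have H : Tendsto (fun x : ℝ => (2*lam.im * x ^ ((1:ℝ)/4))^8
        * Real.exp (-(2*lam.im * x ^ ((1:ℝ)/4)))) atTop (nhds 0) := by
      exact (Real.tendsto_pow_mul_exp_neg_atTop_nhds_zero 8).comp
        ((tendsto_rpow_atTop (by norm_num : (0:ℝ) < 1/4)).const_mul_atTop hc)
    have hx2bound : ∀ᶠ x in atTop,
        Real.exp 2 * Real.exp (-(2*lam.im) * x ^ ((1:ℝ)/4)) ≤ x ^ (-2:ℝ) := by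
      have hε : (0:ℝ) < (2*lam.im)^8 * Real.exp (-2) := by positivity
      have hev := Metric.tendsto_nhds.mp H ((2*lam.im)^8 * Real.exp (-2)) hε
      filter_upwards [hev, eventually_ge_atTop (1:ℝ)] with x hx hx1
      have hxpos : (0:ℝ) < x := lt_of_lt_of_le one_pos hx1
      rw [Real.dist_eq, sub_zero] at hx
      set t := x ^ ((1:ℝ)/4) with ht
      have ht0 : (0:ℝ) ≤ t := Real.rpow_nonneg hxpos.le _
      have habs0 : |(2*lam.im*t)^8 * Real.exp (-(2*lam.im*t))|
          = (2*lam.im*t)^8 * Real.exp (-(2*lam.im*t)) := by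
        apply _root_.abs_of_nonneg; positivity
      rw [habs0] at hx
      have ht8 : t^8 = x^2 := by
        rw [ht, ← Real.rpow_natCast (x ^ ((1:ℝ)/4)) 8, ← Real.rpow_mul hxpos.le,
          ← Real.rpow_natCast x 2]
        norm_num
      have hA : x^2 * Real.exp (-(2*lam.im*t)) ≤ Real.exp (-2) := by
        have hexp : (2*lam.im*t)^8 = (2*lam.im)^8 * t^8 := by ring
        rw [hexp, ht8] at hx
        have h8 : (0:ℝ) < (2*lam.im)^8 := by positivity
        nlinarith [Real.exp_pos (-(2*lam.im*t))]
      have hx2p : (0:ℝ) < x^2 := by positivity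
      have hx2 : x ^ (-2:ℝ) = (x^2)⁻¹ := by
        rw [← Real.rpow_natCast x 2, ← Real.rpow_neg hxpos.le]
        norm_num
      rw [hx2, inv_eq_one_div, le_div_iff₀ hx2p]
      have hmul : Real.exp 2 * Real.exp (-2) = 1 := by
        rw [← Real.exp_add]; norm_num
      have harg : -(2*lam.im) * x ^ ((1:ℝ)/4) = -(2*lam.im*t) := by rw [ht]; ring
      rw [harg]
      nlinarith [mul_le_mul_of_nonneg_left hA (Real.exp_pos 2).le]
    have hgb : ∀ᶠ x in atTop, ‖E x‖^2 ≤ x ^ (-2:ℝ) := by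
      filter_upwards [hEbound, hx2bound] with x h1 h2
      exact le_trans h1 h2
    obtain ⟨N, hN⟩ := eventually_atTop.mp hgb
    set R : ℝ := max N 1 with hRdef
    have hR0 : (0:ℝ) < R := lt_of_lt_of_le one_pos (le_max_right _ _)
    have hcont2 : Continuous (fun x : ℝ => ‖E x‖^2) := (hcont.norm.pow 2)
    have h_Ioc : IntegrableOn (fun x : ℝ => ‖E x‖^2) (Set.Ioc X R) volume :=
      hcont2.integrableOn_Ioc
    have h_Ioi : IntegrableOn (fun x : ℝ => ‖E x‖^2) (Set.Ioi R) volume := by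
      have hint := integrableOn_Ioi_rpow_of_lt (by norm_num : (-2:ℝ) < -1) hR0
      refine hint.mono' hcont2.aestronglyMeasurable ?_
      refine (ae_restrict_iff' measurableSet_Ioi).mpr (ae_of_all _ fun x hx => ?_)
      rw [Real.norm_eq_abs, _root_.abs_of_nonneg (sq_nonneg _)]
      exact hN x (le_of_lt (lt_of_le_of_lt (le_max_left _ _) hx))
    have hsub : Set.Ioi X ⊆ Set.Ioc X R ∪ Set.Ioi R := by
      intro x hx
      rcases le_or_gt x R with h | h
      · exact Or.inl ⟨hx, h⟩
      · exact Or.inr h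
    exact ((h_Ioc.union h_Ioi).mono_set hsub)
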